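/- Let (Ω, F, P) be a probability space with a filtration (F_k), and let (v^k) be a sequence of nonnegative integrable random variables adapted to (F_k) with E[v^0] < ∞. Let (δ^k) and (ε^k) be deterministic sequences of nonnegative real numbers such that δ^k ∈ [0,1] for all k, ∑_{k=0}^∞ δ^k = ∞, ∑_{k=0}^∞ ε^k < ∞, and lim_{k→∞} ε^k/δ^k = 0. If E[v^{k+1} | F_k] ≤ (1−δ^k) v^k + ε^k almost surely for all k ∈ ℕ, then lim_{k→∞} v^k = 0 almost surely. -/

import Mathlib

open Filter MeasureTheory

/-- Lemma 2.2.10 of Polyak (1987). -/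
theorem stmt_19 {Ω : Type*} {m0 : MeasurableSpace Ω} {μ : Measure Ω}
    [IsProbabilityMeasure μ] (ℱ : Filtration ℕ m0)
    (v : ℕ → Ω → ℝ) (δ ε : ℕ → ℝ)
    (hv_adapted : Adapted ℱ v)
    (hv_int : ∀ k, Integrable (v k) μ)
    (hv_nonneg : ∀ k ω, 0 ≤ v k ω)
    (hδ : ∀ k, 0 ≤ δ k ∧ δ k ≤ 1) (hε : ∀ k, 0 ≤ ε k)
    (hδdiv : ¬ Summable δ) (hεsum : Summable ε)
    (hεδ : Tendsto (fun k => ε k / δ k) atTop (nhds 0))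
    (hrec : ∀ k, μ[v (k + 1) | ℱ k] ≤ᵐ[μ]
      fun ω => (1 - δ k) * v k ω + ε k) :
    ∀ᵐ ω ∂μ, Tendsto (fun k => v k ω) atTop (nhds 0) := by
  classical
  set E : ℝ := ∑' k, ε k with hEdef
  set S : ℕ → ℝ := fun k => ∑' j, ε (j + k) with hSdef
  have hS_summable : ∀ k, Summable fun j => ε (j + k) :=
    fun k => (summable_nat_add_iff k).2 hεsum
  have hS_nonneg : ∀ k, 0 ≤ S k := fun k => tsum_nonneg fun j => hε _
  have hS_rec : ∀ k, S k = ε k + S (k + 1) := by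
    intro k
    have h := Summable.tsum_eq_zero_add (hS_summable k)
    have h2 : (∑' j, ε (j + 1 + k)) = S (k + 1) :=
      tsum_congr fun j => by rw [show j + 1 + k = j + (k + 1) by omega]
    simpa [hSdef, zero_add, h2] using h
  have hS_tendsto : Tendsto S atTop (nhds 0) := tendsto_sum_nat_add ε
  have hS_le_E : ∀ n, S n ≤ E := by
    intro n
    have h := Summable.sum_add_tsum_nat_add (f := ε) n hεsum
    have h0 : (0:ℝ) ≤ ∑ k ∈ Finset.range n, ε k := Finset.sum_nonneg fun i _ => hε i
    simp only [hSdef, hEdef]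
    linarith
  -- the auxiliary nonnegative supermartingale
  set Y : ℕ → Ω → ℝ := fun k ω => v k ω + S k with hYdef
  have hY_int : ∀ k, Integrable (Y k) μ := fun k => (hv_int k).add (integrable_const _)
  have hY_adapted : Adapted ℱ Y := fun k => (hv_adapted k).add measurable_const
  have hY_super : Supermartingale Y ℱ μ := by
    refine supermartingale_nat hY_adapted.stronglyAdapted hY_int fun k => ?_
    have h1 : μ[Y (k + 1)|ℱ k] =ᵐ[μ] μ[v (k + 1)|ℱ k] + fun _ => S (k + 1) := by
      refine (condExp_add (hv_int (k + 1)) (integrable_const _) (ℱ k)).trans ?_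
      rw [condExp_const (ℱ.le k)]
    refine h1.le.trans ?_
    filter_upwards [hrec k] with ω hω
    have hδk := (hδ k)
    have hvk := hv_nonneg k ω
    have h2 : (1 - δ k) * v k ω ≤ v k ω := by nlinarith [hδk.1, hδk.2]
    have h3 := hS_rec k
    simp only [hYdef, Pi.add_apply]
    have := hω
    linarith
  -- expectations
  have hInt_nonneg : ∀ k, 0 ≤ ∫ ω, v k ω ∂μ := fun k => integral_nonneg (hv_nonneg k)
  have hEI : ∀ k, ∫ ω, v (k + 1) ω ∂μ ≤ (1 - δ k) * (∫ ω, v k ω ∂μ) + ε k := by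
    intro k
    have h0 : ∫ ω, v (k + 1) ω ∂μ = ∫ ω, (μ[v (k + 1)|ℱ k]) ω ∂μ :=
      (integral_condExp (ℱ.le k)).symm
    have hint2 : Integrable (fun ω => (1 - δ k) * v k ω + ε k) μ :=
      ((hv_int k).const_mul _).add (integrable_const _)
    have h1 : ∫ ω, (μ[v (k + 1)|ℱ k]) ω ∂μ ≤ ∫ ω, ((1 - δ k) * v k ω + ε k) ∂μ :=
      integral_mono_ae integrable_condExp hint2 (hrec k)
    have h2 : ∫ ω, ((1 - δ k) * v k ω + ε k) ∂μ = (1 - δ k) * (∫ ω, v k ω ∂μ) + ε k := by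
      rw [integral_add ((hv_int k).const_mul _) (integrable_const _), integral_const_mul,
        integral_const]
      simp [measure_univ]
    rw [h0]
    rw [h2] at h1
    exact h1
  have key : ∀ n, (∑ k ∈ Finset.range n, δ k * ∫ ω, v k ω ∂μ) + ∫ ω, v n ω ∂μ
      ≤ (∫ ω, v 0 ω ∂μ) + ∑ k ∈ Finset.range n, ε k := by
    intro n
    induction n with
    | zero => simp
    | succ n ih =>
      rw [Finset.sum_range_succ, Finset.sum_range_succ]
      have h1 := hEI n
      have h2 : (1 - δ n) * (∫ ω, v n ω ∂μ) = (∫ ω, v n ω ∂μ) - δ n * (∫ ω, v n ω ∂μ) := by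
        ring
      linarith
  have hsum_det : Summable (fun k => δ k * ∫ ω, v k ω ∂μ) := by
    refine summable_of_sum_range_le (c := (∫ ω, v 0 ω ∂μ) + E)
      (fun k => mul_nonneg (hδ k).1 (hInt_nonneg k)) (fun n => ?_)
    have h1 := key n
    have h2 : ∑ k ∈ Finset.range n, ε k ≤ E :=
      Summable.sum_le_tsum _ (fun i _ => hε i) hεsum
    have h3 := hInt_nonneg n
    linarith
  -- a.e. summability of δ k * v k ω
  have hmeas : ∀ k, AEMeasurable (fun ω => ENNReal.ofReal (δ k * v k ω)) μ :=
    fun k => ((hv_int k).aemeasurable.const_mul (δ k)).ennreal_ofReal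
  have hae_summable : ∀ᵐ ω ∂μ, Summable fun k => δ k * v k ω := by
    have hlint : ∫⁻ ω, ∑' k, ENNReal.ofReal (δ k * v k ω) ∂μ
        = ∑' k, ENNReal.ofReal (δ k * ∫ ω, v k ω ∂μ) := by
      rw [lintegral_tsum hmeas]
      refine tsum_congr fun k => ?_
      rw [← ofReal_integral_eq_lintegral_ofReal ((hv_int k).const_mul _)
        (Eventually.of_forall fun ω => mul_nonneg (hδ k).1 (hv_nonneg k ω)),
        integral_const_mul]
    have hne : ∫⁻ ω, ∑' k, ENNReal.ofReal (δ k * v k ω) ∂μ ≠ ⊤ := by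
      rw [hlint, ← ENNReal.ofReal_tsum_of_nonneg
        (fun k => mul_nonneg (hδ k).1 (hInt_nonneg k)) hsum_det]
      exact ENNReal.ofReal_ne_top
    have hfin : ∀ᵐ ω ∂μ, (∑' k, ENNReal.ofReal (δ k * v k ω)) < ⊤ :=
      ae_lt_top' (AEMeasurable.ennreal_tsum hmeas) hne
    filter_upwards [hfin] with ω hω
    have hsum := ENNReal.summable_toReal hω.ne
    refine hsum.congr fun k => ?_
    rw [ENNReal.toReal_ofReal (mul_nonneg (hδ k).1 (hv_nonneg k ω))]
  -- L¹ boundedness of Y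
  set R : ENNReal := ENNReal.ofReal ((∫ ω, v 0 ω ∂μ) + E + E) with hRdef
  have hbdd : ∀ n, eLpNorm (Y n) 1 μ ≤ R := by
    intro n
    have hpos : ∀ ω, 0 ≤ Y n ω := fun ω => add_nonneg (hv_nonneg n ω) (hS_nonneg n)
    have heq : eLpNorm (Y n) 1 μ = ENNReal.ofReal (∫ ω, Y n ω ∂μ) := by
      rw [eLpNorm_one_eq_lintegral_enorm,
        ofReal_integral_eq_lintegral_ofReal (hY_int n) (Eventually.of_forall hpos)]
      exact lintegral_congr fun ω => Real.enorm_eq_ofReal (hpos ω)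
    rw [heq, hRdef]
    refine ENNReal.ofReal_le_ofReal ?_
    have hintY : ∫ ω, Y n ω ∂μ = (∫ ω, v n ω ∂μ) + S n := by
      simp only [hYdef]
      rw [integral_add (hv_int n) (integrable_const _), integral_const]
      simp [measure_univ]
    have h1 := key n
    have h2 : ∑ k ∈ Finset.range n, ε k ≤ E := Summable.sum_le_tsum _ (fun i _ => hε i) hεsum
    have h3 : (0:ℝ) ≤ ∑ k ∈ Finset.range n, δ k * ∫ ω, v k ω ∂μ :=
      Finset.sum_nonneg fun k _ => mul_nonneg (hδ k).1 (hInt_nonneg k)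
    have h4 := hS_le_E n
    rw [hintY]
    linarith
  -- a.e. convergence of Y
  have hconv : ∀ᵐ ω ∂μ, ∃ c, Tendsto (fun n => Y n ω) atTop (nhds c) := by
    have hsub := hY_super.neg
    have hb : ∀ n, eLpNorm ((-Y) n) 1 μ ≤ R := by
      intro n
      have : (-Y) n = -(Y n) := rfl
      rw [this, eLpNorm_neg]
      exact hbdd n
    filter_upwards [hsub.exists_ae_tendsto_of_bdd hb] with ω hc
    obtain ⟨c, hc⟩ := hc
    refine ⟨-c, ?_⟩
    have := hc.neg
    simpa using this
  -- conclude
  filter_upwards [hconv, hae_summable] with ω hc hsumω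
  obtain ⟨c, hc⟩ := hc
  have hv_tendsto : Tendsto (fun n => v n ω) atTop (nhds c) := by
    have h := hc.sub hS_tendsto
    rw [sub_zero] at h
    refine h.congr fun n => ?_
    simp [hYdef]
  have hc_nonneg : 0 ≤ c :=
    ge_of_tendsto hv_tendsto (Eventually.of_forall fun n => hv_nonneg n ω)
  have hc0 : c = 0 := by
    by_contra hne
    have hcpos : 0 < c := hc_nonneg.lt_of_ne (Ne.symm hne)
    have hev : ∀ᶠ n in atTop, c / 2 < v n ω :=
      hv_tendsto.eventually (eventually_gt_nhds (half_lt_self hcpos))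
    obtain ⟨N, hN⟩ := eventually_atTop.1 hev
    have h1 : Summable fun k => δ (k + N) * v (k + N) ω :=
      (summable_nat_add_iff N).2 hsumω
    have h2 : Summable fun k => (c / 2) * δ (k + N) := by
      refine Summable.of_nonneg_of_le
        (fun k => mul_nonneg (le_of_lt (half_pos hcpos)) (hδ _).1) (fun k => ?_) h1
      have hk := hN (k + N) (Nat.le_add_left N k)
      have hδk := (hδ (k + N)).1
      calc c / 2 * δ (k + N) ≤ v (k + N) ω * δ (k + N) :=
            mul_le_mul_of_nonneg_right (le_of_lt hk) hδk
        _ = δ (k + N) * v (k + N) ω := mul_comm _ _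
    have h3 : Summable fun k => δ (k + N) := by
      have h := h2.mul_left (2 / c)
      refine h.congr fun k => ?_
      field_simp
    exact hδdiv ((summable_nat_add_iff N).1 h3)
  exact hc0 ▸ hv_tendsto
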